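/- Let A be a deterministic finite automaton and Z a terminal strongly connected component. Then L(A, 2^Z) = {ξ : Inf(A, ξ) ∩ Z ≠ ∅} = {w ∈ X^* : δ(s₀, w) ∈ Z} · X^ω; in particular this ω-language is open in the Cantor space X^ω. -/

import Mathlib

open Set

/-- `w` is a finite prefix of the infinite word `ξ`. -/
def InfPrefix {X : Type*} (w : List X) (ξ : ℕ → X) : Prop :=
  ∀ i : Fin w.length, w.get i = ξ i.val

/-- The set of finite prefixes of elements of `F`. -/
def Pref {X : Type*} (F : Set (ℕ → X)) : Set (List X) :=
  {w | ∃ ξ ∈ F, InfPrefix w ξ}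

/-- Concatenation of a finite word in front of an infinite word. -/
def wordCat {X : Type*} (w : List X) (ξ : ℕ → X) : ℕ → X :=
  fun n => if h : n < w.length then w.get ⟨n, h⟩ else ξ (n - w.length)


/-- A deterministic automaton with initial state and transition function. -/
structure DetAuto (X S : Type*) where
  start : S
  step : S → X → S

/-- The extension of the transition function to finite words. -/
def DetAuto.run {X S : Type*} (A : DetAuto X S) (s : S) (w : List X) : S :=
  w.foldl A.step s

/-- The state reached after reading the first `n` letters of `ξ`. -/
def DetAuto.statesAt {X S : Type*} (A : DetAuto X S) (ξ : ℕ → X) (n : ℕ) : S :=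
  A.run A.start (List.ofFn fun i : Fin n => ξ i.val)

/-- `Inf(A, ξ)`: the set of states visited infinitely often on input `ξ`. -/
def AInf {X S : Type*} (A : DetAuto X S) (ξ : ℕ → X) : Set S :=
  {s | ∀ n : ℕ, ∃ m ≥ n, A.statesAt ξ m = s}

/-- Muller acceptance: `L(A, T)`. -/
def Lang {X S : Type*} (A : DetAuto X S) (T : Set (Set S)) : Set (ℕ → X) :=
  {ξ | AInf A ξ ∈ T}

/-- `LOOP_A`: the set of realizable infinity sets. -/
def Loops {X S : Type*} (A : DetAuto X S) : Set (Set S) :=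
  {Z | ∃ ξ : ℕ → X, AInf A ξ = Z}

/-- Strongly connected components: the loops maximal w.r.t. inclusion, i.e.
any other loop is contained in them or disjoint from them. -/
def IsSCC {X S : Type*} (A : DetAuto X S) (Z : Set S) : Prop :=
  Z ∈ Loops A ∧ ∀ Z' ∈ Loops A, Z' ⊆ Z ∨ Z' ∩ Z = ∅

/-- The relation `Z₁ ↦ Z₂`. -/
def ReachRel {X S : Type*} (A : DetAuto X S) (Z₁ Z₂ : Set S) : Prop :=
  Z₁ ≠ Z₂ ∧ ∃ s ∈ Z₁, ∃ w : List X, A.run s w ∈ Z₂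

/-- Terminal strongly connected components. -/
def IsTerminalSCC {X S : Type*} (A : DetAuto X S) (Z : Set S) : Prop :=
  IsSCC A Z ∧ ∀ Z' : Set S, IsSCC A Z' → Z ≠ Z' → ¬ ReachRel A Z Z'


section Aux

variable {X S : Type*}

lemma DetAuto.run_append (A : DetAuto X S) (s : S) (u v : List X) :
    A.run s (u ++ v) = A.run (A.run s u) v := List.foldl_append

/-- first `n` letters of `ξ`. -/
def pre (ξ : ℕ → X) (n : ℕ) : List X := List.ofFn fun i : Fin n => ξ i.val

/-- letters `m, m+1, …, m+k-1` of `ξ`. -/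
def seg (ξ : ℕ → X) (m k : ℕ) : List X := List.ofFn fun i : Fin k => ξ (m + i.val)

@[simp] lemma pre_length (ξ : ℕ → X) (n : ℕ) : (pre ξ n).length = n := List.length_ofFn
@[simp] lemma seg_length (ξ : ℕ → X) (m k : ℕ) : (seg ξ m k).length = k := List.length_ofFn

lemma statesAt_def (A : DetAuto X S) (ξ : ℕ → X) (n : ℕ) :
    A.statesAt ξ n = A.run A.start (pre ξ n) := rfl

lemma pre_add (ξ : ℕ → X) (a b : ℕ) : pre ξ (a + b) = pre ξ a ++ seg ξ a b := by
  rw [pre, List.ofFn_add]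
  congr 1

lemma seg_add (ξ : ℕ → X) (m a b : ℕ) :
    seg ξ m (a + b) = seg ξ m a ++ seg ξ (m + a) b := by
  rw [seg, List.ofFn_add]
  refine congrArg₂ (· ++ ·) ?_ ?_
  · apply congrArg List.ofFn; funext i; simp
  · apply congrArg List.ofFn; funext i; simp [Nat.add_assoc]

lemma statesAt_add (A : DetAuto X S) (ξ : ℕ → X) (a b : ℕ) :
    A.statesAt ξ (a + b) = A.run (A.statesAt ξ a) (seg ξ a b) := by
  rw [statesAt_def, pre_add, A.run_append, ← statesAt_def]

lemma seg_take (ξ : ℕ → X) (m : ℕ) {r k : ℕ} (h : r ≤ k) :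
    (seg ξ m k).take r = seg ξ m r := by
  calc (seg ξ m k).take r
      = (seg ξ m r ++ seg ξ (m + r) (k - r)).take (seg ξ m r).length := by
        rw [← seg_add, seg_length, Nat.add_sub_cancel' h]
    _ = seg ξ m r := List.take_left

/-- the periodic infinite word `c^ω`. -/
def per (c : List X) (hc : 0 < c.length) : ℕ → X :=
  fun n => c.get ⟨n % c.length, Nat.mod_lt n hc⟩

lemma pre_per (c : List X) (hc : 0 < c.length) {k : ℕ} (hk : k ≤ c.length) :
    pre (per c hc) k = c.take k := by
  apply List.ext_getElem
  · simp [Nat.min_eq_left hk]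
  · intro i h1 h2
    simp only [pre, List.getElem_ofFn, List.getElem_take]
    simp only [pre_length] at h1
    simp [per, Nat.mod_eq_of_lt (lt_of_lt_of_le h1 hk), List.get_eq_getElem]

lemma seg_per (c : List X) (hc : 0 < c.length) (k : ℕ) :
    seg (per c hc) c.length k = pre (per c hc) k := by
  apply congrArg List.ofFn; funext i
  simp [per, Nat.add_mod_left]

lemma run_per (A : DetAuto X S) (t : S) (c : List X) (hc : 0 < c.length)
    (ht : A.run t c = t) (k : ℕ) :
    A.run t (pre (per c hc) k) = A.run t (c.take (k % c.length)) := by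
  induction k using Nat.strong_induction_on with
  | _ k ih =>
    rcases lt_or_ge k c.length with h | h
    · rw [pre_per c hc h.le, Nat.mod_eq_of_lt h]
    · obtain ⟨k', rfl⟩ : ∃ k', k = c.length + k' :=
        ⟨k - c.length, (Nat.add_sub_cancel' h).symm⟩
      rw [pre_add, A.run_append, pre_per c hc le_rfl, List.take_length, ht,
        seg_per, ih k' (by omega), Nat.add_mod_left]

lemma pre_wordCat (w : List X) (ξ : ℕ → X) : pre (wordCat w ξ) w.length = w := by
  apply List.ext_getElem
  · simp
  · intro i h1 h2
    simp only [pre, List.getElem_ofFn]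
    simp [wordCat, h2, List.get_eq_getElem]

lemma seg_wordCat (w : List X) (ξ : ℕ → X) (k : ℕ) :
    seg (wordCat w ξ) w.length k = pre ξ k := by
  apply congrArg List.ofFn; funext i
  simp [wordCat]

lemma statesAt_wordCat (A : DetAuto X S) (w : List X) (ξ : ℕ → X) (k : ℕ) :
    A.statesAt (wordCat w ξ) (w.length + k) = A.run (A.run A.start w) (pre ξ k) := by
  rw [statesAt_add, statesAt_def, pre_wordCat, seg_wordCat]

lemma ainf_per (A : DetAuto X S) (u c : List X) (hc : 0 < c.length)
    (ht : A.run (A.run A.start u) c = A.run A.start u) :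
    AInf A (wordCat u (per c hc)) =
      {s | ∃ r < c.length, A.run (A.run A.start u) (c.take r) = s} := by
  have key : ∀ k, A.statesAt (wordCat u (per c hc)) (u.length + k) =
      A.run (A.run A.start u) (c.take (k % c.length)) := by
    intro k; rw [statesAt_wordCat, run_per A _ c hc ht]
  ext s; constructor
  · intro hs
    obtain ⟨m, hm, hms⟩ := hs u.length
    obtain ⟨k, rfl⟩ : ∃ k, m = u.length + k :=
      ⟨m - u.length, (Nat.add_sub_cancel' hm).symm⟩
    exact ⟨k % c.length, Nat.mod_lt _ hc, by rw [← key]; exact hms⟩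
  · rintro ⟨r, hr, rfl⟩ n
    refine ⟨u.length + (r + c.length * n), ?_, ?_⟩
    · have : n ≤ c.length * n := Nat.le_mul_of_pos_left n hc
      omega
    · rw [key, Nat.add_mul_mod_self_left, Nat.mod_eq_of_lt hr]

lemma ainf_nonempty [Finite S] (A : DetAuto X S) (ξ : ℕ → X) : (AInf A ξ).Nonempty := by
  obtain ⟨s, hs⟩ := Finite.exists_infinite_fiber (A.statesAt ξ)
  rw [Set.infinite_coe_iff] at hs
  refine ⟨s, fun n => ?_⟩
  obtain ⟨m, hm, hlt⟩ := hs.exists_gt n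
  exact ⟨m, hlt.le, hm⟩

lemma eventually_ainf [Fintype S] (A : DetAuto X S) (ξ : ℕ → X) :
    ∃ N, ∀ m ≥ N, A.statesAt ξ m ∈ AInf A ξ := by
  have h : ∀ s : S, ∃ n, s ∉ AInf A ξ → ∀ m ≥ n, A.statesAt ξ m ≠ s := by
    intro s
    by_cases hs : s ∈ AInf A ξ
    · exact ⟨0, fun h => absurd hs h⟩
    · simp only [AInf, Set.mem_setOf_eq, not_forall] at hs
      obtain ⟨n, hn⟩ := hs
      push_neg at hn
      exact ⟨n, fun _ m hm => hn m hm⟩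
  choose f hf using h
  refine ⟨Finset.univ.sup f, fun m hm => ?_⟩
  by_contra hc
  exact hf _ hc m (le_trans (Finset.le_sup (Finset.mem_univ _)) hm) rfl

lemma exists_cover [Fintype S] (A : DetAuto X S) (ξ : ℕ → X) {t : S}
    (ht : t ∈ AInf A ξ) :
    ∃ m m', m < m' ∧ A.statesAt ξ m = t ∧ A.statesAt ξ m' = t ∧
      (∀ k, m ≤ k → k ≤ m' → A.statesAt ξ k ∈ AInf A ξ) ∧
      (∀ a ∈ AInf A ξ, ∃ k, m ≤ k ∧ k < m' ∧ A.statesAt ξ k = a) := by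
  obtain ⟨N, hN⟩ := eventually_ainf A ξ
  obtain ⟨m, hm, hmt⟩ := ht N
  have h2 : ∀ a : S, ∃ k, a ∈ AInf A ξ → (m ≤ k ∧ A.statesAt ξ k = a) := by
    intro a
    by_cases ha : a ∈ AInf A ξ
    · obtain ⟨k, hk1, hk2⟩ := ha m; exact ⟨k, fun _ => ⟨hk1, hk2⟩⟩
    · exact ⟨0, fun h => absurd h ha⟩
  choose g hg using h2
  set M := Finset.univ.sup g with hM
  obtain ⟨m', hm', hm't⟩ := ht (M + 1)
  have hgM : ∀ a : S, g a ≤ M := fun a => Finset.le_sup (Finset.mem_univ _)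
  have hmm' : m < m' := by
    have h1 := (hg t ht).1
    have h2 := hgM t
    omega
  refine ⟨m, m', hmm', hmt, hm't, fun k hk _ => hN k (le_trans hm hk), fun a ha => ?_⟩
  exact ⟨g a, (hg a ha).1, by have := hgM a; omega, (hg a ha).2⟩

lemma run_take_append_le (A : DetAuto X S) (t : S) (c₁ c₂ : List X) {r : ℕ}
    (h : r ≤ c₁.length) :
    A.run t ((c₁ ++ c₂).take r) = A.run t (c₁.take r) := by
  rw [List.take_append, Nat.sub_eq_zero_of_le h, List.take_zero,
    List.append_nil]

lemma run_take_append_ge (A : DetAuto X S) (t : S) (c₁ c₂ : List X) {r : ℕ}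
    (h : c₁.length ≤ r) (ht : A.run t c₁ = t) :
    A.run t ((c₁ ++ c₂).take r) = A.run t (c₂.take (r - c₁.length)) := by
  rw [List.take_append, List.take_of_length_le h, A.run_append, ht]

/-- The key "sweep" construction: from `t ∈ AInf A ξ` we get a nonempty cycle word `c`
at `t` all whose intermediate states lie in `AInf A ξ` and which visits every state
of `AInf A ξ`. -/
lemma exists_cycle [Fintype S] (A : DetAuto X S) (ξ : ℕ → X) {t : S}
    (ht : t ∈ AInf A ξ) :
    ∃ c : List X, 0 < c.length ∧ A.run t c = t ∧
      {s | ∃ r < c.length, A.run t (c.take r) = s} = AInf A ξ := by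
  obtain ⟨m, m', hmm', hmt, hm't, hin, hcov⟩ := exists_cover A ξ ht
  refine ⟨seg ξ m (m' - m), by simp; omega, ?_, ?_⟩
  · have := statesAt_add A ξ m (m' - m)
    rw [Nat.add_sub_cancel' hmm'.le, hmt, hm't] at this
    exact this.symm
  · have hrun : ∀ r ≤ m' - m, A.run t ((seg ξ m (m' - m)).take r) = A.statesAt ξ (m + r) := by
      intro r hr
      rw [seg_take ξ m hr, ← hmt, ← statesAt_add]
    ext s
    simp only [Set.mem_setOf_eq, seg_length]
    constructor
    · rintro ⟨r, hr, rfl⟩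
      rw [hrun r hr.le]
      exact hin (m + r) (by omega) (by omega)
    · intro hs
      obtain ⟨k, hk1, hk2, hk3⟩ := hcov s hs
      exact ⟨k - m, by omega, by rw [hrun (k - m) (by omega), Nat.add_sub_cancel' hk1, hk3]⟩

lemma loops_union [Fintype S] (A : DetAuto X S) {Y₁ Y₂ : Set S}
    (h₁ : Y₁ ∈ Loops A) (h₂ : Y₂ ∈ Loops A) (hne : (Y₁ ∩ Y₂).Nonempty) :
    Y₁ ∪ Y₂ ∈ Loops A := by
  obtain ⟨t, ht₁, ht₂⟩ := hne
  obtain ⟨ξ₁, rfl⟩ := h₁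
  obtain ⟨ξ₂, rfl⟩ := h₂
  obtain ⟨c₁, hc₁, hr₁, hs₁⟩ := exists_cycle A ξ₁ ht₁
  obtain ⟨c₂, hc₂, hr₂, hs₂⟩ := exists_cycle A ξ₂ ht₂
  -- word from start to t
  obtain ⟨m, _, hmt⟩ := ht₁ 0
  set u := pre ξ₁ m with hu
  have hru : A.run A.start u = t := by rw [← statesAt_def]; exact hmt
  set c := c₁ ++ c₂ with hcEq
  have hc : 0 < c.length := by simp [hcEq]; omega
  have hrc : A.run t c = t := by rw [hcEq, A.run_append, hr₁, hr₂]
  refine ⟨wordCat u (per c hc), ?_⟩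
  rw [ainf_per A u c hc (by rw [hru]; exact hrc)]
  rw [hru]
  ext s
  simp only [Set.mem_setOf_eq, Set.mem_union]
  constructor
  · rintro ⟨r, hr, rfl⟩
    rcases le_or_gt r c₁.length with h | h
    · left; rw [hcEq, run_take_append_le A t c₁ c₂ h]
      rcases lt_or_eq_of_le h with h' | h'
      · rw [← hs₁]; exact ⟨r, h', rfl⟩
      · rw [h', List.take_length, hr₁]; exact ht₁
    · right
      rw [hcEq, run_take_append_ge A t c₁ c₂ h.le hr₁, ← hs₂]
      refine ⟨r - c₁.length, ?_, rfl⟩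
      rw [hcEq] at hr; simp at hr; omega
  · rintro (hs | hs)
    · rw [← hs₁] at hs
      obtain ⟨r, hr, rfl⟩ := hs
      refine ⟨r, ?_, ?_⟩
      · rw [hcEq]; simp; omega
      · rw [hcEq, run_take_append_le A t c₁ c₂ hr.le]
    · rw [← hs₂] at hs
      obtain ⟨r, hr, rfl⟩ := hs
      refine ⟨c₁.length + r, ?_, ?_⟩
      · rw [hcEq]; simp; omega
      · rw [hcEq, run_take_append_ge A t c₁ c₂ (by omega) hr₁, Nat.add_sub_cancel_left]

lemma exists_scc_superset [Fintype S] (A : DetAuto X S) {Y : Set S} (hY : Y ∈ Loops A) :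
    ∃ Y', IsSCC A Y' ∧ Y ⊆ Y' := by
  have hfin : {Y' | Y' ∈ Loops A ∧ Y ⊆ Y'}.Finite := Set.toFinite _
  obtain ⟨Y', hY', hmax⟩ : ∃ Y' ∈ {Y' | Y' ∈ Loops A ∧ Y ⊆ Y'},
      ∀ a' ∈ {Y' | Y' ∈ Loops A ∧ Y ⊆ Y'}, id Y' ≤ id a' → id Y' = id a' := by
    obtain ⟨Y', hY', hmax'⟩ := Set.Finite.exists_maximalFor id _ hfin ⟨Y, hY, subset_rfl⟩
    exact ⟨Y', hY', fun a' ha' hle => le_antisymm hle (hmax' ha' hle)⟩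
  refine ⟨Y', ⟨hY'.1, fun Z'' hZ'' => ?_⟩, hY'.2⟩
  rcases Set.eq_empty_or_nonempty (Z'' ∩ Y') with he | hne
  · exact Or.inr he
  · left
    have hun : Z'' ∪ Y' ∈ Loops A := loops_union A hZ'' hY'.1 hne
    have := hmax (Z'' ∪ Y') ⟨hun, hY'.2.trans Set.subset_union_right⟩
      (Set.subset_union_right)
    simp only [id] at this
    intro x hx
    rw [this]
    exact Or.inl hx

lemma terminal_closed [Fintype S] (A : DetAuto X S) {Z : Set S} (hZ : IsTerminalSCC A Z)
    {z : S} (hz : z ∈ Z) (w : List X) : A.run z w ∈ Z := by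
  obtain ⟨⟨hloop, hmax⟩, hterm⟩ := hZ
  obtain ⟨ξ, hξ⟩ := hloop
  have hz' : z ∈ AInf A ξ := by rw [hξ]; exact hz
  obtain ⟨m₀, _, hm₀⟩ := hz' 0
  set u₀ := pre ξ m₀ with hu₀
  have hru₀ : A.run A.start u₀ = z := by rw [← statesAt_def]; exact hm₀
  set s := A.run z w with hs
  set η := wordCat (u₀ ++ w) ξ with hη
  have hrs : A.run A.start (u₀ ++ w) = s := by rw [A.run_append, hru₀]
  have hreach : ∀ a ∈ AInf A η, ∃ p : List X, A.run s p = a := by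
    intro a ha
    obtain ⟨m, hm, hma⟩ := ha (u₀ ++ w).length
    obtain ⟨k, rfl⟩ : ∃ k, m = (u₀ ++ w).length + k :=
      ⟨m - (u₀ ++ w).length, (Nat.add_sub_cancel' hm).symm⟩
    refine ⟨pre ξ k, ?_⟩
    rw [← hrs, ← statesAt_wordCat, ← hη]
    exact hma
  rcases hmax (AInf A η) ⟨η, rfl⟩ with hsub | hdis
  · -- AInf η ⊆ Z: build a loop through both z and s
    by_cases hw : w = []
    · rw [hs, hw]; exact hz
    · obtain ⟨t, ht⟩ := ainf_nonempty A η
      obtain ⟨p, hp⟩ := hreach t ht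
      have htZ : t ∈ AInf A ξ := by rw [hξ]; exact hsub ht
      obtain ⟨i, _, hi⟩ := htZ 0
      obtain ⟨j, hj, hjz⟩ := hz' i
      set q := seg ξ i (j - i) with hq
      have hrq : A.run t q = z := by
        rw [← hi, ← statesAt_add, Nat.add_sub_cancel' hj]; exact hjz
      set c := w ++ (p ++ q) with hc
      have hclen : 0 < c.length := by
        rw [hc]; simp
        exact Or.inl (List.length_pos_iff.2 hw)
      have hrc : A.run z c = z := by
        rw [hc, A.run_append, A.run_append, ← hs, hp, hrq]
      by_cases hpq : p = [] ∧ q = []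
      · -- then s = t and t = z
        rw [hpq.1] at hp
        rw [hpq.2] at hrq
        have : s = z := by rw [← hrq, ← hp]; rfl
        rw [this]; exact hz
      · have hpqlen : 0 < p.length + q.length := by
          by_contra hcon
          push_neg at hcon
          exact hpq ⟨List.eq_nil_of_length_eq_zero (by omega),
            List.eq_nil_of_length_eq_zero (by omega)⟩
        have hZ₁ : AInf A (wordCat u₀ (per c hclen)) =
            {s' | ∃ r < c.length, A.run z (c.take r) = s'} := by
          rw [ainf_per A u₀ c hclen (by rw [hru₀]; exact hrc), hru₀]
        have hzZ₁ : z ∈ AInf A (wordCat u₀ (per c hclen)) := by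
          rw [hZ₁]; exact ⟨0, hclen, rfl⟩
        have hsZ₁ : s ∈ AInf A (wordCat u₀ (per c hclen)) := by
          rw [hZ₁]
          refine ⟨w.length, ?_, ?_⟩
          · rw [hc]; simp; omega
          · rw [hc, List.take_left, hs]
        rcases hmax _ ⟨wordCat u₀ (per c hclen), rfl⟩ with hsub' | hdis'
        · exact hsub' hsZ₁
        · exfalso
          have : z ∈ AInf A (wordCat u₀ (per c hclen)) ∩ Z := ⟨hzZ₁, hz⟩
          rw [hdis'] at this
          exact this
  · -- disjoint: contradiction with terminality
    exfalso
    obtain ⟨Y', hY'scc, hY'sub⟩ := exists_scc_superset A ⟨η, rfl⟩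
    obtain ⟨t, ht⟩ := ainf_nonempty A η
    have htY' : t ∈ Y' := hY'sub ht
    have hZne : Z ≠ Y' := by
      intro he
      have : t ∈ AInf A η ∩ Z := ⟨ht, by rw [he]; exact htY'⟩
      rw [hdis] at this
      exact this
    obtain ⟨p, hp⟩ := hreach t ht
    refine hterm Y' hY'scc hZne ⟨hZne, z, hz, w ++ p, ?_⟩
    rw [A.run_append, ← hs, hp]
    exact htY'

end Aux

/-- For a terminal SCC Z, L(A, 2^Z) = {ξ : Inf(A,ξ) ∩ Z ≠ ∅}
 = {w : δ(s₀,w) ∈ Z}·X^ω, an open set. -/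
theorem lang_terminalSCC_open {X S : Type*} [Fintype X] [Fintype S]
    [TopologicalSpace X] [DiscreteTopology X]
    (A : DetAuto X S) (Z : Set S) (hZ : IsTerminalSCC A Z) :
    Lang A {Y : Set S | Y ⊆ Z} = {ξ : ℕ → X | (AInf A ξ ∩ Z).Nonempty} ∧
    Lang A {Y : Set S | Y ⊆ Z} =
      {η : ℕ → X | ∃ w : List X, A.run A.start w ∈ Z ∧
        ∃ ξ : ℕ → X, η = wordCat w ξ} ∧
    IsOpen (Lang A {Y : Set S | Y ⊆ Z}) := by
  have hmax := hZ.1.2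
  have eq1 : Lang A {Y : Set S | Y ⊆ Z} = {ξ : ℕ → X | (AInf A ξ ∩ Z).Nonempty} := by
    ext ξ
    simp only [Lang, Set.mem_setOf_eq]
    constructor
    · intro h
      obtain ⟨s, hs⟩ := ainf_nonempty A ξ
      exact ⟨s, hs, h hs⟩
    · rintro ⟨s, hs1, hs2⟩
      rcases hmax (AInf A ξ) ⟨ξ, rfl⟩ with h | h
      · exact h
      · exfalso
        have : s ∈ AInf A ξ ∩ Z := ⟨hs1, hs2⟩
        rw [h] at this
        exact this
  have eq2 : Lang A {Y : Set S | Y ⊆ Z} =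
      {η : ℕ → X | ∃ w : List X, A.run A.start w ∈ Z ∧ ∃ ξ : ℕ → X, η = wordCat w ξ} := by
    ext η
    simp only [Lang, Set.mem_setOf_eq]
    constructor
    · intro h
      obtain ⟨s, hs⟩ := ainf_nonempty A η
      obtain ⟨m, _, hm⟩ := hs 0
      refine ⟨pre η m, ?_, fun n => η (n + m), ?_⟩
      · rw [← statesAt_def, hm]; exact h hs
      · funext n
        simp only [wordCat, pre_length]
        split_ifs with hn
        · simp [pre, List.get_eq_getElem]
        · congr 1
          omega
    · rintro ⟨w, hw, ξ, rfl⟩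
      intro a ha
      obtain ⟨m, hm, hma⟩ := ha w.length
      obtain ⟨k, rfl⟩ : ∃ k, m = w.length + k :=
        ⟨m - w.length, (Nat.add_sub_cancel' hm).symm⟩
      rw [statesAt_wordCat] at hma
      rw [← hma]
      exact terminal_closed A hZ hw (pre ξ k)
  refine ⟨eq1, eq2, ?_⟩
  rw [eq2]
  have : {η : ℕ → X | ∃ w : List X, A.run A.start w ∈ Z ∧ ∃ ξ : ℕ → X, η = wordCat w ξ} =
      ⋃ w : List X, ⋃ (_ : A.run A.start w ∈ Z), {η : ℕ → X | ∃ ξ : ℕ → X, η = wordCat w ξ} := by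
    ext η
    simp [Set.mem_iUnion]
  rw [this]
  refine isOpen_iUnion fun w => isOpen_iUnion fun _ => ?_
  have hcyl : {η : ℕ → X | ∃ ξ : ℕ → X, η = wordCat w ξ} =
      ⋂ i : Fin w.length, (fun η : ℕ → X => η i.val) ⁻¹' {w.get i} := by
    ext η
    simp only [Set.mem_setOf_eq, Set.mem_iInter, Set.mem_preimage, Set.mem_singleton_iff]
    constructor
    · rintro ⟨ξ, rfl⟩ i
      simp [wordCat, i.isLt]
    · intro h
      refine ⟨fun n => η (n + w.length), funext fun n => ?_⟩
      simp only [wordCat]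
      split_ifs with hn
      · have := h ⟨n, hn⟩
        simp only [List.get_eq_getElem] at this ⊢
        exact this
      · congr 1
        omega
  rw [hcyl]
  exact isOpen_iInter_of_finite fun i =>
    (isOpen_discrete _).preimage (continuous_apply i.val)
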